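/- arXiv:2109.05094 — 2 statements merged into one kernel-verified Lean document; each statement's English description precedes it below -/
import Mathlib

section
/- If a bit multigraph corresponds to a (2n+1)×(2n+1) crossword puzzle and a vertex b > 0 in part B is adjacent to two vertices a₁ < a₂ (both positive) in the same floor set ⌊k⌋_A, then the edge {a₁, b} is labeled '−' and the edge {a₂, b} is labeled '+'. -/
/-- Edge labels of a bit multigraph: `+`, `-`, `0`. -/
inductive Label
  | plus
  | minus
  | zero
  deriving DecidableEq

/-- A (balanced) bipartite indexed tricolored multigraph: vertex indices in each
part are rationals, edges are triples (index in A, index in B, label). -/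
structure BitMG where
  A : Finset ℚ
  B : Finset ℚ
  E : Multiset (ℚ × ℚ × Label)

/-- Degree of a vertex of part A: number of incident edges. -/
def degA (G : BitMG) (x : ℚ) : ℕ := (G.E.filter (fun e => e.1 = x)).card

/-- Degree of a vertex of part B: number of incident edges. -/
def degB (G : BitMG) (y : ℚ) : ℕ := (G.E.filter (fun e => e.2.1 = y)).card

/-- Given that the edge `(a,b,L)` was voided and a vertex incident to it was split
into `v0` (lower) and `v1` (upper), `splitTarget L M v0 v1 other otherRemoved`
tells which of the two split vertices an edge labeled `M`, whose other endpoint is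
`other` (the other endpoint of the removed edge being `otherRemoved`), is
reassigned to, following the voiding rules of the paper. -/
def splitTarget (L M : Label) (v0 v1 : ℚ) (other otherRemoved : ℚ) : ℚ :=
  if M = L then
    match L with
    | Label.minus => if otherRemoved < other then v0 else v1
    | _ => if other < otherRemoved then v0 else v1
  else
    match M with
    | Label.plus => v1
    | Label.minus => v0
    | Label.zero => if L = Label.plus then v0 else v1

/-- The voiding procedure: `Voiding G G'` holds when `G'` is obtained from `G` by
removing one edge `(a,b,L)`, splitting `a` into fresh vertices `a0 < a1` and `b`
into `b0 < b1` (keeping integer parts and relative order of indices), and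
reassigning the remaining incident edges according to the rules of the paper. -/
def Voiding (G G' : BitMG) : Prop :=
  ∃ a b L, (a, b, L) ∈ G.E ∧ a ∈ G.A ∧ b ∈ G.B ∧
    ∃ a0 a1 b0 b1 : ℚ,
      a0 ∉ G.A ∧ a1 ∉ G.A ∧ b0 ∉ G.B ∧ b1 ∉ G.B ∧
      a0 < a1 ∧ b0 < b1 ∧
      ⌊a0⌋ = ⌊a⌋ ∧ ⌊a1⌋ = ⌊a⌋ ∧ ⌊b0⌋ = ⌊b⌋ ∧ ⌊b1⌋ = ⌊b⌋ ∧
      (∀ x ∈ G.A, x ≠ a → (x < a → x < a0) ∧ (a < x → a1 < x)) ∧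
      (∀ y ∈ G.B, y ≠ b → (y < b → y < b0) ∧ (b < y → b1 < y)) ∧
      G'.A = insert a0 (insert a1 (G.A.erase a)) ∧
      G'.B = insert b0 (insert b1 (G.B.erase b)) ∧
      G'.E = (G.E.erase (a, b, L)).map (fun e =>
        ((if e.1 = a then splitTarget L e.2.2 a0 a1 e.2.1 b else e.1),
         (if e.2.1 = b then splitTarget L e.2.2 b0 b1 e.1 a else e.2.1),
         e.2.2))

/-- `VoidedFrom v G G'` : `G'` is obtained from `G` by `v` voiding operations. -/
def VoidedFrom : ℕ → BitMG → BitMG → Prop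
  | 0, G, G' => G' = G
  | v + 1, G, G' => ∃ H, VoidedFrom v G H ∧ Voiding H G'

/-- The crossword multigraph of the unvoided (2n+1)×(2n+1) grid: each part has
vertices indexed 0,1,…,n; nonzero vertices are pairwise joined by one `+` and one
`-` edge, and zero vertices are joined to every vertex of the other part by a `0`
edge (with a single 0–0 edge). -/
def unvoidedCMG (n : ℕ) : BitMG where
  A := (Finset.Icc 0 n).image (fun i : ℕ => (i : ℚ))
  B := (Finset.Icc 0 n).image (fun i : ℕ => (i : ℚ))
  E := ((Finset.Icc 1 n ×ˢ Finset.Icc 1 n).val.map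
          (fun p => ((p.1 : ℚ), (p.2 : ℚ), Label.plus)))
      + ((Finset.Icc 1 n ×ˢ Finset.Icc 1 n).val.map
          (fun p => ((p.1 : ℚ), (p.2 : ℚ), Label.minus)))
      + ((Finset.Icc 0 n).val.map (fun b => ((0 : ℚ), (b : ℚ), Label.zero)))
      + ((Finset.Icc 1 n).val.map (fun a => ((a : ℚ), (0 : ℚ), Label.zero)))

section BlueAboveRed

lemma splitTarget_cases (L M : Label) (v0 v1 o r : ℚ) :
    splitTarget L M v0 v1 o r = v0 ∨ splitTarget L M v0 v1 o r = v1 := by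
  cases L <;> cases M <;> unfold splitTarget <;> split_ifs <;> simp_all

lemma floor_splitTarget {v0 v1 : ℚ} {w : ℤ} (h0 : ⌊v0⌋ = w) (h1 : ⌊v1⌋ = w)
    (L M : Label) (o r : ℚ) : ⌊splitTarget L M v0 v1 o r⌋ = w := by
  rcases splitTarget_cases L M v0 v1 o r with h | h <;> rw [h] <;> assumption

/-- Key order lemma: after a split, the endpoint of a minus edge stays below the
endpoint of a plus edge. -/
lemma split_order {L : Label} {x v0 v1 : ℚ} {S : Finset ℚ}
    (hv01 : v0 < v1)
    (hsep : ∀ z ∈ S, z ≠ x → (z < x → z < v0) ∧ (x < z → v1 < z))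
    {ap am : ℚ} (hap : ap ∈ S) (ham : am ∈ S) (hle : am ≤ ap)
    (op om r : ℚ) :
    (if am = x then splitTarget L Label.minus v0 v1 om r else am)
      ≤ (if ap = x then splitTarget L Label.plus v0 v1 op r else ap) := by
  have hm01 : splitTarget L Label.minus v0 v1 om r ≤ v1 := by
    rcases splitTarget_cases L Label.minus v0 v1 om r with h | h <;> rw [h] <;>
      first | exact le_of_lt hv01 | exact le_refl _
  have hp01 : v0 ≤ splitTarget L Label.plus v0 v1 op r := by
    rcases splitTarget_cases L Label.plus v0 v1 op r with h | h <;> rw [h] <;>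
      first | exact le_of_lt hv01 | exact le_refl _
  by_cases h1 : am = x <;> by_cases h2 : ap = x
  · rw [if_pos h1, if_pos h2]
    cases L with
    | plus => exact le_trans (le_of_eq rfl) hp01
    | minus => exact le_trans hm01 (le_of_eq rfl)
    | zero => exact le_trans (le_of_eq rfl) (le_trans hv01.le (le_of_eq rfl))
  · rw [if_pos h1, if_neg h2]
    have hxap : x < ap := lt_of_le_of_ne (h1 ▸ hle) (fun h => h2 h.symm)
    exact le_of_lt (lt_of_le_of_lt hm01 ((hsep ap hap h2).2 hxap))
  · rw [if_neg h1, if_pos h2]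
    have hamx : am < x := lt_of_le_of_ne (h2 ▸ hle) h1
    exact le_of_lt (lt_of_lt_of_le ((hsep am ham h1).1 hamx) hp01)
  · rw [if_neg h1, if_neg h2]; exact hle

/-- The invariant preserved by voiding. -/
def CwInv (G : BitMG) : Prop :=
  (∀ e ∈ G.E, e.1 ∈ G.A ∧ e.2.1 ∈ G.B) ∧
  (∀ e ∈ G.E, e.2.2 = Label.zero ↔ (⌊e.1⌋ = 0 ∨ ⌊e.2.1⌋ = 0)) ∧
  (∀ (k m : ℤ) (L : Label),
      (G.E.filter (fun e => ⌊e.1⌋ = k ∧ ⌊e.2.1⌋ = m ∧ e.2.2 = L)).card ≤ 1) ∧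
  (∀ a b a' b', (a, b, Label.plus) ∈ G.E → (a', b', Label.minus) ∈ G.E →
      ⌊a'⌋ = ⌊a⌋ → ⌊b'⌋ = ⌊b⌋ → a' ≤ a ∧ b' ≤ b)

lemma voiding_inv {G G' : BitMG} (hI : CwInv G) (hV : Voiding G G') : CwInv G' := by
  classical
  obtain ⟨a, b, L, hab, haA, hbB, a0, a1, b0, b1, hna0, hna1, hnb0, hnb1,
    ha01, hb01, hfa0, hfa1, hfb0, hfb1, hsepA, hsepB, hA', hB', hE'⟩ := hV
  obtain ⟨h1, h2, h3, h4⟩ := hI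
  set f : ℚ × ℚ × Label → ℚ × ℚ × Label := fun e =>
    ((if e.1 = a then splitTarget L e.2.2 a0 a1 e.2.1 b else e.1),
     (if e.2.1 = b then splitTarget L e.2.2 b0 b1 e.1 a else e.2.1),
     e.2.2) with hfdef
  have hE2 : G'.E = (G.E.erase (a, b, L)).map f := by rw [hfdef]; exact hE'
  have hfA : ∀ (x y : ℚ) (M : Label),
      ⌊(if x = a then splitTarget L M a0 a1 y b else x)⌋ = ⌊x⌋ := by
    intro x y M
    split_ifs with h
    · rw [h]; exact floor_splitTarget hfa0 hfa1 _ _ _ _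
    · rfl
  have hfB : ∀ (x y : ℚ) (M : Label),
      ⌊(if y = b then splitTarget L M b0 b1 x a else y)⌋ = ⌊y⌋ := by
    intro x y M
    split_ifs with h
    · rw [h]; exact floor_splitTarget hfb0 hfb1 _ _ _ _
    · rfl
  have hfl1 : ∀ e : ℚ × ℚ × Label, ⌊(f e).1⌋ = ⌊e.1⌋ := fun e => hfA e.1 e.2.1 e.2.2
  have hfl2 : ∀ e : ℚ × ℚ × Label, ⌊(f e).2.1⌋ = ⌊e.2.1⌋ := fun e => hfB e.1 e.2.1 e.2.2
  refine ⟨?_, ?_, ?_, ?_⟩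
  · -- endpoints belong to the parts
    intro e' he'
    rw [hE2] at he'
    obtain ⟨e, he, rfl⟩ := Multiset.mem_map.1 he'
    have heG := Multiset.mem_of_mem_erase he
    obtain ⟨heA, heB⟩ := h1 e heG
    constructor
    · show (if e.1 = a then splitTarget L e.2.2 a0 a1 e.2.1 b else e.1) ∈ G'.A
      rw [hA']
      split_ifs with h
      · rcases splitTarget_cases L e.2.2 a0 a1 e.2.1 b with h' | h' <;> rw [h'] <;> simp
      · simp only [Finset.mem_insert, Finset.mem_erase]
        exact Or.inr (Or.inr ⟨h, heA⟩)
    · show (if e.2.1 = b then splitTarget L e.2.2 b0 b1 e.1 a else e.2.1) ∈ G'.B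
      rw [hB']
      split_ifs with h
      · rcases splitTarget_cases L e.2.2 b0 b1 e.1 a with h' | h' <;> rw [h'] <;> simp
      · simp only [Finset.mem_insert, Finset.mem_erase]
        exact Or.inr (Or.inr ⟨h, heB⟩)
  · -- zero labels iff a floor-zero endpoint
    intro e' he'
    rw [hE2] at he'
    obtain ⟨e, he, rfl⟩ := Multiset.mem_map.1 he'
    have heG := Multiset.mem_of_mem_erase he
    rw [hfl1 e, hfl2 e]
    exact h2 e heG
  · -- at most one edge per (floor pair, label)
    intro k m Lb
    rw [hE2, Multiset.filter_map, Multiset.card_map]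
    have hcongr :
        Multiset.filter ((fun e : ℚ × ℚ × Label => ⌊e.1⌋ = k ∧ ⌊e.2.1⌋ = m ∧ e.2.2 = Lb) ∘ f)
            (G.E.erase (a, b, L))
        = Multiset.filter (fun e : ℚ × ℚ × Label => ⌊e.1⌋ = k ∧ ⌊e.2.1⌋ = m ∧ e.2.2 = Lb)
            (G.E.erase (a, b, L)) := by
      apply Multiset.filter_congr
      intro e _
      simp only [Function.comp_apply, hfl1 e, hfl2 e]
      exact Iff.rfl
    rw [hcongr]
    calc (Multiset.filter _ (G.E.erase (a, b, L))).card
        ≤ (Multiset.filter (fun e : ℚ × ℚ × Label => ⌊e.1⌋ = k ∧ ⌊e.2.1⌋ = m ∧ e.2.2 = Lb) G.E).card :=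
          Multiset.card_le_card (Multiset.filter_le_filter _ (Multiset.erase_le _ _))
      _ ≤ 1 := h3 k m Lb
  · -- minus below plus
    intro A1 B1 A2 B2 hp hm hflA hflB
    rw [hE2] at hp hm
    obtain ⟨ep, hep, heq⟩ := Multiset.mem_map.1 hp
    obtain ⟨em, hem, heq'⟩ := Multiset.mem_map.1 hm
    obtain ⟨xp, yp, lp⟩ := ep
    obtain ⟨xm, ym, lm⟩ := em
    simp only [hfdef, Prod.mk.injEq] at heq heq'
    obtain ⟨hA1, hB1, hlp⟩ := heq
    obtain ⟨hA2, hB2, hlm⟩ := heq'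
    subst hlp hlm
    have hpG : (xp, yp, Label.plus) ∈ G.E := Multiset.mem_of_mem_erase hep
    have hmG : (xm, ym, Label.minus) ∈ G.E := Multiset.mem_of_mem_erase hem
    have e1 : ⌊A1⌋ = ⌊xp⌋ := by rw [← hA1]; exact hfA xp yp Label.plus
    have e2 : ⌊A2⌋ = ⌊xm⌋ := by rw [← hA2]; exact hfA xm ym Label.minus
    have e3 : ⌊B1⌋ = ⌊yp⌋ := by rw [← hB1]; exact hfB xp yp Label.plus
    have e4 : ⌊B2⌋ = ⌊ym⌋ := by rw [← hB2]; exact hfB xm ym Label.minus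
    have hx : ⌊xm⌋ = ⌊xp⌋ := by rw [← e2, hflA, e1]
    have hy : ⌊ym⌋ = ⌊yp⌋ := by rw [← e4, hflB, e3]
    obtain ⟨hxe, hye⟩ := h4 xp yp xm ym hpG hmG hx hy
    have hApA : xp ∈ G.A := (h1 _ hpG).1
    have hAmA : xm ∈ G.A := (h1 _ hmG).1
    have hBpB : yp ∈ G.B := (h1 _ hpG).2
    have hBmB : ym ∈ G.B := (h1 _ hmG).2
    constructor
    · rw [← hA1, ← hA2]
      exact split_order ha01 hsepA hApA hAmA hxe yp ym b
    · rw [← hB1, ← hB2]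
      exact split_order hb01 hsepB hBpB hBmB hye xp xm a

lemma card_filter_map_le_one {α : Type*} (s : Finset α) (f : α → ℚ × ℚ × Label)
    (p : ℚ × ℚ × Label → Prop) [DecidablePred p]
    (h : ∀ x ∈ s, ∀ y ∈ s, p (f x) → p (f y) → x = y) :
    ((s.val.map f).filter p).card ≤ 1 := by
  rw [Multiset.filter_map, Multiset.card_map]
  have hnd : (Multiset.filter (p ∘ f) s.val).Nodup := s.nodup.filter _
  have : (Finset.mk (Multiset.filter (p ∘ f) s.val) hnd).card ≤ 1 := by
    apply Finset.card_le_one.mpr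
    intro x hx y hy
    simp only [Finset.mem_mk, Multiset.mem_filter, Function.comp_apply] at hx hy
    exact h x hx.1 y hy.1 hx.2 hy.2
  exact this

lemma filter_map_eq_zero {α : Type*} (s : Multiset α) (f : α → ℚ × ℚ × Label)
    (p : ℚ × ℚ × Label → Prop) [DecidablePred p]
    (h : ∀ x ∈ s, ¬ p (f x)) : ((s.map f).filter p) = 0 := by
  rw [Multiset.filter_map]
  have h2 : Multiset.filter (p ∘ f) s = 0 := Multiset.filter_eq_nil.mpr h
  rw [h2, Multiset.map_zero]

lemma unvoidedE_eq (n : ℕ) : (unvoidedCMG n).E =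
    ((Finset.Icc 1 n ×ˢ Finset.Icc 1 n).val.map
        (fun p : ℕ × ℕ => ((p.1 : ℚ), (p.2 : ℚ), Label.plus)))
    + ((Finset.Icc 1 n ×ˢ Finset.Icc 1 n).val.map
        (fun p : ℕ × ℕ => ((p.1 : ℚ), (p.2 : ℚ), Label.minus)))
    + ((Finset.Icc 0 n).val.map (fun b : ℕ => ((0 : ℚ), (b : ℚ), Label.zero)))
    + ((Finset.Icc 1 n).val.map (fun a : ℕ => ((a : ℚ), (0 : ℚ), Label.zero))) := by
  simp only [unvoidedCMG]
  simp [Multiset.map_bind, Multiset.bind_singleton, Multiset.map_map]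

lemma unvoided_mem_E {n : ℕ} {e : ℚ × ℚ × Label} (he : e ∈ (unvoidedCMG n).E) :
    (∃ i j : ℕ, 1 ≤ i ∧ i ≤ n ∧ 1 ≤ j ∧ j ≤ n ∧ e = ((i : ℚ), (j : ℚ), Label.plus)) ∨
    (∃ i j : ℕ, 1 ≤ i ∧ i ≤ n ∧ 1 ≤ j ∧ j ≤ n ∧ e = ((i : ℚ), (j : ℚ), Label.minus)) ∨
    (∃ j : ℕ, j ≤ n ∧ e = ((0 : ℚ), (j : ℚ), Label.zero)) ∨
    (∃ i : ℕ, 1 ≤ i ∧ i ≤ n ∧ e = ((i : ℚ), (0 : ℚ), Label.zero)) := by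
  rw [unvoidedE_eq] at he
  simp only [Multiset.mem_add] at he
  rcases he with ((h | h) | h) | h
  · obtain ⟨q, hq, rfl⟩ := Multiset.mem_map.1 h
    rw [Finset.mem_val, Finset.mem_product, Finset.mem_Icc, Finset.mem_Icc] at hq
    exact Or.inl ⟨q.1, q.2, hq.1.1, hq.1.2, hq.2.1, hq.2.2, rfl⟩
  · obtain ⟨q, hq, rfl⟩ := Multiset.mem_map.1 h
    rw [Finset.mem_val, Finset.mem_product, Finset.mem_Icc, Finset.mem_Icc] at hq
    exact Or.inr (Or.inl ⟨q.1, q.2, hq.1.1, hq.1.2, hq.2.1, hq.2.2, rfl⟩)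
  · obtain ⟨j, hj, rfl⟩ := Multiset.mem_map.1 h
    rw [Finset.mem_val, Finset.mem_Icc] at hj
    exact Or.inr (Or.inr (Or.inl ⟨j, hj.2, rfl⟩))
  · obtain ⟨i, hi, rfl⟩ := Multiset.mem_map.1 h
    rw [Finset.mem_val, Finset.mem_Icc] at hi
    exact Or.inr (Or.inr (Or.inr ⟨i, hi.1, hi.2, rfl⟩))

lemma inv_unvoided (n : ℕ) : CwInv (unvoidedCMG n) := by
  have hmem : ∀ i : ℕ, i ≤ n →
      ((i : ℚ)) ∈ (Finset.Icc 0 n).image (fun i : ℕ => (i : ℚ)) := by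
    intro i hi
    exact Finset.mem_image.2 ⟨i, Finset.mem_Icc.2 ⟨Nat.zero_le _, hi⟩, rfl⟩
  have h0 : (0 : ℚ) ∈ (Finset.Icc 0 n).image (fun i : ℕ => (i : ℚ)) := by
    simpa using hmem 0 (Nat.zero_le n)
  refine ⟨?_, ?_, ?_, ?_⟩
  · intro e he
    rcases unvoided_mem_E he with ⟨i, j, _, hi2, _, hj2, rfl⟩ | ⟨i, j, _, hi2, _, hj2, rfl⟩ |
      ⟨j, hj2, rfl⟩ | ⟨i, _, hi2, rfl⟩
    · exact ⟨hmem i hi2, hmem j hj2⟩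
    · exact ⟨hmem i hi2, hmem j hj2⟩
    · exact ⟨h0, hmem j hj2⟩
    · exact ⟨hmem i hi2, h0⟩
  · intro e he
    rcases unvoided_mem_E he with ⟨i, j, hi1, _, hj1, _, rfl⟩ | ⟨i, j, hi1, _, hj1, _, rfl⟩ |
      ⟨j, _, rfl⟩ | ⟨i, hi1, _, rfl⟩
    · show Label.plus = Label.zero ↔ _
      simp only [Int.floor_natCast]
      constructor
      · intro h; exact Label.noConfusion h
      · rintro (h | h) <;> (exfalso; omega)
    · show Label.minus = Label.zero ↔ _
      simp only [Int.floor_natCast]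
      constructor
      · intro h; exact Label.noConfusion h
      · rintro (h | h) <;> (exfalso; omega)
    · show Label.zero = Label.zero ↔ _
      simp
    · show Label.zero = Label.zero ↔ _
      simp
  · intro k m L
    rw [unvoidedE_eq]
    rw [Multiset.filter_add, Multiset.filter_add, Multiset.filter_add,
      Multiset.card_add, Multiset.card_add, Multiset.card_add]
    cases L with
    | plus =>
      have c2 := filter_map_eq_zero (Finset.Icc 1 n ×ˢ Finset.Icc 1 n).val
        (fun q => ((q.1 : ℚ), (q.2 : ℚ), Label.minus))
        (fun e => ⌊e.1⌋ = k ∧ ⌊e.2.1⌋ = m ∧ e.2.2 = Label.plus)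
        (by intro x _ hx; exact absurd hx.2.2 (by simp))
      have c3 := filter_map_eq_zero (Finset.Icc 0 n).val
        (fun b => ((0 : ℚ), (b : ℚ), Label.zero))
        (fun e => ⌊e.1⌋ = k ∧ ⌊e.2.1⌋ = m ∧ e.2.2 = Label.plus)
        (by intro x _ hx; exact absurd hx.2.2 (by simp))
      have c4 := filter_map_eq_zero (Finset.Icc 1 n).val
        (fun a => ((a : ℚ), (0 : ℚ), Label.zero))
        (fun e => ⌊e.1⌋ = k ∧ ⌊e.2.1⌋ = m ∧ e.2.2 = Label.plus)
        (by intro x _ hx; exact absurd hx.2.2 (by simp))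
      have c1 := card_filter_map_le_one (Finset.Icc 1 n ×ˢ Finset.Icc 1 n)
        (fun q => ((q.1 : ℚ), (q.2 : ℚ), Label.plus))
        (fun e => ⌊e.1⌋ = k ∧ ⌊e.2.1⌋ = m ∧ e.2.2 = Label.plus)
        (by
          intro x _ y _ hx hy
          obtain ⟨hx1, hx2, -⟩ := hx
          obtain ⟨hy1, hy2, -⟩ := hy
          simp only [Int.floor_natCast] at hx1 hx2 hy1 hy2
          have e1 : x.1 = y.1 := by exact_mod_cast hx1.trans hy1.symm
          have e2 : x.2 = y.2 := by exact_mod_cast hx2.trans hy2.symm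
          exact Prod.ext e1 e2)
      rw [c2, c3, c4]
      simpa using c1
    | minus =>
      have c1 := filter_map_eq_zero (Finset.Icc 1 n ×ˢ Finset.Icc 1 n).val
        (fun q => ((q.1 : ℚ), (q.2 : ℚ), Label.plus))
        (fun e => ⌊e.1⌋ = k ∧ ⌊e.2.1⌋ = m ∧ e.2.2 = Label.minus)
        (by intro x _ hx; exact absurd hx.2.2 (by simp))
      have c3 := filter_map_eq_zero (Finset.Icc 0 n).val
        (fun b => ((0 : ℚ), (b : ℚ), Label.zero))
        (fun e => ⌊e.1⌋ = k ∧ ⌊e.2.1⌋ = m ∧ e.2.2 = Label.minus)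
        (by intro x _ hx; exact absurd hx.2.2 (by simp))
      have c4 := filter_map_eq_zero (Finset.Icc 1 n).val
        (fun a => ((a : ℚ), (0 : ℚ), Label.zero))
        (fun e => ⌊e.1⌋ = k ∧ ⌊e.2.1⌋ = m ∧ e.2.2 = Label.minus)
        (by intro x _ hx; exact absurd hx.2.2 (by simp))
      have c2 := card_filter_map_le_one (Finset.Icc 1 n ×ˢ Finset.Icc 1 n)
        (fun q => ((q.1 : ℚ), (q.2 : ℚ), Label.minus))
        (fun e => ⌊e.1⌋ = k ∧ ⌊e.2.1⌋ = m ∧ e.2.2 = Label.minus)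
        (by
          intro x _ y _ hx hy
          obtain ⟨hx1, hx2, -⟩ := hx
          obtain ⟨hy1, hy2, -⟩ := hy
          simp only [Int.floor_natCast] at hx1 hx2 hy1 hy2
          have e1 : x.1 = y.1 := by exact_mod_cast hx1.trans hy1.symm
          have e2 : x.2 = y.2 := by exact_mod_cast hx2.trans hy2.symm
          exact Prod.ext e1 e2)
      rw [c1, c3, c4]
      simpa using c2
    | zero =>
      have c1 := filter_map_eq_zero (Finset.Icc 1 n ×ˢ Finset.Icc 1 n).val
        (fun q => ((q.1 : ℚ), (q.2 : ℚ), Label.plus))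
        (fun e => ⌊e.1⌋ = k ∧ ⌊e.2.1⌋ = m ∧ e.2.2 = Label.zero)
        (by intro x _ hx; exact absurd hx.2.2 (by simp))
      have c2 := filter_map_eq_zero (Finset.Icc 1 n ×ˢ Finset.Icc 1 n).val
        (fun q => ((q.1 : ℚ), (q.2 : ℚ), Label.minus))
        (fun e => ⌊e.1⌋ = k ∧ ⌊e.2.1⌋ = m ∧ e.2.2 = Label.zero)
        (by intro x _ hx; exact absurd hx.2.2 (by simp))
      rw [c1, c2]
      by_cases hk0 : k = 0
      · have c4 := filter_map_eq_zero (Finset.Icc 1 n).val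
          (fun a => ((a : ℚ), (0 : ℚ), Label.zero))
          (fun e => ⌊e.1⌋ = k ∧ ⌊e.2.1⌋ = m ∧ e.2.2 = Label.zero)
          (by
            intro x hxm hpx
            obtain ⟨hx1, -, -⟩ := hpx
            simp only [Int.floor_natCast] at hx1
            rw [Finset.mem_val, Finset.mem_Icc] at hxm
            subst hk0
            omega)
        have c3 := card_filter_map_le_one (Finset.Icc 0 n)
          (fun b => ((0 : ℚ), (b : ℚ), Label.zero))
          (fun e => ⌊e.1⌋ = k ∧ ⌊e.2.1⌋ = m ∧ e.2.2 = Label.zero)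
          (by
            intro x _ y _ hx hy
            obtain ⟨-, hx2, -⟩ := hx
            obtain ⟨-, hy2, -⟩ := hy
            simp only [Int.floor_natCast] at hx2 hy2
            exact_mod_cast hx2.trans hy2.symm)
        rw [c4]
        simpa using c3
      · have c3 := filter_map_eq_zero (Finset.Icc 0 n).val
          (fun b => ((0 : ℚ), (b : ℚ), Label.zero))
          (fun e => ⌊e.1⌋ = k ∧ ⌊e.2.1⌋ = m ∧ e.2.2 = Label.zero)
          (by
            intro x _ hpx
            obtain ⟨hx1, -, -⟩ := hpx
            simp only [Int.floor_zero] at hx1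
            exact hk0 hx1.symm)
        have c4 := card_filter_map_le_one (Finset.Icc 1 n)
          (fun a => ((a : ℚ), (0 : ℚ), Label.zero))
          (fun e => ⌊e.1⌋ = k ∧ ⌊e.2.1⌋ = m ∧ e.2.2 = Label.zero)
          (by
            intro x _ y _ hx hy
            obtain ⟨hx1, -, -⟩ := hx
            obtain ⟨hy1, -, -⟩ := hy
            simp only [Int.floor_natCast] at hx1 hy1
            exact_mod_cast hx1.trans hy1.symm)
        rw [c3]
        simpa using c4
  · intro A1 B1 A2 B2 hp hm hflA hflB
    rcases unvoided_mem_E hp with ⟨i, j, _, _, _, _, heq⟩ | ⟨i, j, _, _, _, _, heq⟩ |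
      ⟨j, _, heq⟩ | ⟨i, _, _, heq⟩ <;>
        [skip;
         exact absurd (congrArg (fun e : ℚ × ℚ × Label => e.2.2) heq) (by simp);
         exact absurd (congrArg (fun e : ℚ × ℚ × Label => e.2.2) heq) (by simp);
         exact absurd (congrArg (fun e : ℚ × ℚ × Label => e.2.2) heq) (by simp)]
    rcases unvoided_mem_E hm with ⟨i', j', _, _, _, _, heq'⟩ | ⟨i', j', _, _, _, _, heq'⟩ |
      ⟨j', _, heq'⟩ | ⟨i', _, _, heq'⟩ <;>
        [exact absurd (congrArg (fun e : ℚ × ℚ × Label => e.2.2) heq') (by simp);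
         skip;
         exact absurd (congrArg (fun e : ℚ × ℚ × Label => e.2.2) heq') (by simp);
         exact absurd (congrArg (fun e : ℚ × ℚ × Label => e.2.2) heq') (by simp)]
    simp only [Prod.mk.injEq] at heq heq'
    obtain ⟨hA1, hB1, -⟩ := heq
    obtain ⟨hA2, hB2, -⟩ := heq'
    have e1 : ⌊A1⌋ = (i : ℤ) := by rw [hA1]; exact Int.floor_natCast _
    have e2 : ⌊A2⌋ = (i' : ℤ) := by rw [hA2]; exact Int.floor_natCast _
    have e3 : ⌊B1⌋ = (j : ℤ) := by rw [hB1]; exact Int.floor_natCast _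
    have e4 : ⌊B2⌋ = (j' : ℤ) := by rw [hB2]; exact Int.floor_natCast _
    have hx : i' = i := by
      have h := (e2.symm.trans hflA).trans e1
      exact_mod_cast h
    have hy : j' = j := by
      have h := (e4.symm.trans hflB).trans e3
      exact_mod_cast h
    constructor
    · rw [hA1, hA2, hx]
    · rw [hB1, hB2, hy]

lemma voidedFrom_inv : ∀ (v : ℕ) (G G' : BitMG), VoidedFrom v G G' → CwInv G → CwInv G'
  | 0, _, _, h, hI => by subst h; exact hI
  | v + 1, G, G', h, hI => by
    obtain ⟨H, hH, hV⟩ := h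
    exact voiding_inv (voidedFrom_inv v G H hH hI) hV

end BlueAboveRed

/-- Blue above red: in a bit multigraph corresponding to a (2n+1)×(2n+1)
crossword puzzle, if a vertex b > 0 of part B is adjacent to two vertices
a₁ < a₂ (both positive) of the same floor set ⌊k⌋_A, then the edge {a₁,b} is
labeled '−' and the edge {a₂,b} is labeled '+'. -/
theorem blue_above_red (n : ℕ) (G : BitMG)
    (hG : ∃ v, VoidedFrom v (unvoidedCMG n) G)
    (k : ℕ) (hk : 0 < k)
    (a1 a2 b : ℚ) (ha1 : a1 ∈ G.A) (ha2 : a2 ∈ G.A) (hb : b ∈ G.B)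
    (hf1 : ⌊a1⌋ = (k : ℤ)) (hf2 : ⌊a2⌋ = (k : ℤ))
    (hpos1 : 0 < a1) (hlt : a1 < a2) (hbpos : 0 < b)
    (l1 l2 : Label)
    (he1 : (a1, b, l1) ∈ G.E) (he2 : (a2, b, l2) ∈ G.E) :
    l1 = Label.minus ∧ l2 = Label.plus := by
  classical
  have hI : CwInv G := by
    obtain ⟨v, hv⟩ := hG
    exact voidedFrom_inv v _ _ hv (inv_unvoided n)
  obtain ⟨hIa, hIz, hIc, hIo⟩ := hI
  have hne : ((a1, b, l1) : ℚ × ℚ × Label) ≠ (a2, b, l2) := by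
    intro h
    exact absurd (congrArg Prod.fst h) (ne_of_lt hlt)
  have pair_card : ∀ (p : ℚ × ℚ × Label → Prop) [DecidablePred p],
      p (a1, b, l1) → p (a2, b, l2) → 2 ≤ (G.E.filter p).card := by
    intro p _ hp1 hp2
    have m1 : (a1, b, l1) ∈ G.E.filter p := Multiset.mem_filter.2 ⟨he1, hp1⟩
    have m2 : (a2, b, l2) ∈ (G.E.filter p).erase (a1, b, l1) :=
      (Multiset.mem_erase_of_ne (Ne.symm hne)).2 (Multiset.mem_filter.2 ⟨he2, hp2⟩)
    have hc1 := Multiset.card_erase_of_mem m1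
    rw [Nat.pred_eq_sub_one] at hc1
    have hc2 : 0 < Multiset.card ((G.E.filter p).erase (a1, b, l1)) :=
      Multiset.card_pos_iff_exists_mem.2 ⟨_, m2⟩
    omega
  have hkne : (k : ℤ) ≠ 0 := by exact_mod_cast hk.ne'
  by_cases hb0 : ⌊b⌋ = 0
  · have hl1 : l1 = Label.zero := (hIz (a1, b, l1) he1).2 (Or.inr hb0)
    have hl2 : l2 = Label.zero := (hIz (a2, b, l2) he2).2 (Or.inr hb0)
    have hc2 := pair_card (fun e => ⌊e.1⌋ = (k : ℤ) ∧ ⌊e.2.1⌋ = 0 ∧ e.2.2 = Label.zero)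
      ⟨hf1, hb0, hl1⟩ ⟨hf2, hb0, hl2⟩
    have hc1 := hIc k 0 Label.zero
    omega
  · have hl1 : l1 ≠ Label.zero := by
      intro h
      rcases (hIz (a1, b, l1) he1).1 h with h' | h'
      · rw [hf1] at h'; exact hkne h'
      · exact hb0 h'
    have hl2 : l2 ≠ Label.zero := by
      intro h
      rcases (hIz (a2, b, l2) he2).1 h with h' | h'
      · rw [hf2] at h'; exact hkne h'
      · exact hb0 h'
    have hll : l1 ≠ l2 := by
      intro h
      subst h
      have hc2 := pair_card (fun e => ⌊e.1⌋ = (k : ℤ) ∧ ⌊e.2.1⌋ = ⌊b⌋ ∧ e.2.2 = l1)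
        ⟨hf1, rfl, rfl⟩ ⟨hf2, rfl, rfl⟩
      have hc1 := hIc k ⌊b⌋ l1
      omega
    cases l1 with
    | zero => exact absurd rfl hl1
    | plus =>
      cases l2 with
      | zero => exact absurd rfl hl2
      | plus => exact absurd rfl hll
      | minus =>
        have := hIo a1 b a2 b he1 he2 (hf2.trans hf1.symm) rfl
        exact absurd this.1 (not_le.2 hlt)
    | minus =>
      cases l2 with
      | zero => exact absurd rfl hl2
      | minus => exact absurd rfl hll
      | plus => exact ⟨rfl, rfl⟩
end

section
/- In a bit multigraph corresponding to a crossword puzzle, the number of edges incident to the zero floor set ⌊0⌋_A is at least the number of floor sets of part B that have exactly one vertex. -/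
lemma splitTarget_mem (L M : Label) (v0 v1 o oR : ℚ) :
    splitTarget L M v0 v1 o oR = v0 ∨ splitTarget L M v0 v1 o oR = v1 := by
  unfold splitTarget
  cases L <;> cases M <;> simp only [] <;> split_ifs <;> simp_all

/-- Key invariant: every vertex alone in its B-floor-set has an incident edge
from the zero floor of A. -/
lemma floor_invariant (n v : ℕ) (G : BitMG) (h : VoidedFrom v (unvoidedCMG n) G) :
    ∀ q ∈ G.B, (G.B.filter (fun q' => ⌊q'⌋ = ⌊q⌋)).card = 1 →
      ∃ e ∈ G.E, ⌊e.1⌋ = 0 ∧ e.2.1 = q := by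
  induction v generalizing G with
  | zero =>
    intro q hq _
    subst h
    simp only [unvoidedCMG, Finset.mem_image] at hq
    obtain ⟨i, hi, rfl⟩ := hq
    refine ⟨((0 : ℚ), (i : ℚ), Label.zero), ?_, by norm_num, rfl⟩
    show _ ∈ (unvoidedCMG n).E
    unfold unvoidedCMG
    refine Multiset.mem_add.2 (Or.inl (Multiset.mem_add.2 (Or.inr ?_)))
    refine Multiset.mem_map.2 ⟨(i : ℚ), ?_, rfl⟩
    simp only [bind, pure, Multiset.bind_singleton, Multiset.mem_map]
    exact ⟨i, (by rw [Finset.mem_val]; exact hi), rfl⟩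
  | succ v ih =>
    obtain ⟨H, hH, hV⟩ := h
    obtain ⟨a, b, L, habL, haA, hbB, a0, a1, b0, b1, ha0, ha1, hb0, hb1,
      ha01, hb01, hfa0, hfa1, hfb0, hfb1, hA, hB, hGA, hGB, hGE⟩ := hV
    intro q hq hcard
    -- q's floor is not ⌊b⌋
    have hqb : ⌊q⌋ ≠ ⌊b⌋ := by
      intro hfloor
      have hb0m : b0 ∈ G.B.filter (fun q' => ⌊q'⌋ = ⌊q⌋) := by
        rw [hGB]; simp [hfb0, hfloor]
      have hb1m : b1 ∈ G.B.filter (fun q' => ⌊q'⌋ = ⌊q⌋) := by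
        rw [hGB]; simp [hfb1, hfloor]
      have : ({b0, b1} : Finset ℚ) ⊆ G.B.filter (fun q' => ⌊q'⌋ = ⌊q⌋) := by
        intro x hx
        rcases Finset.mem_insert.1 hx with rfl | hx
        · exact hb0m
        · rw [Finset.mem_singleton] at hx; subst hx; exact hb1m
      have h2 : ({b0, b1} : Finset ℚ).card = 2 := by
        rw [Finset.card_insert_of_notMem (by simpa using ne_of_lt hb01),
          Finset.card_singleton]
      have := Finset.card_le_card this
      omega
    have hqb0 : q ≠ b0 := fun h => hqb (h ▸ hfb0.symm ▸ rfl)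
    have hqb1 : q ≠ b1 := fun h => hqb (h ▸ hfb1.symm ▸ rfl)
    have hqH : q ∈ H.B.erase b := by
      rw [hGB] at hq
      rcases Finset.mem_insert.1 hq with rfl | hq
      · exact absurd rfl hqb0
      rcases Finset.mem_insert.1 hq with rfl | hq
      · exact absurd rfl hqb1
      exact hq
    have hqneb : q ≠ b := (Finset.mem_erase.1 hqH).1
    -- filter over H.B equals filter over G.B
    have hfilter : H.B.filter (fun q' => ⌊q'⌋ = ⌊q⌋)
        = G.B.filter (fun q' => ⌊q'⌋ = ⌊q⌋) := by
      rw [hGB, Finset.filter_insert, Finset.filter_insert, Finset.filter_erase,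
        if_neg (by rw [hfb0]; exact fun h => hqb h.symm),
        if_neg (by rw [hfb1]; exact fun h => hqb h.symm),
        Finset.erase_eq_of_notMem]
      simp only [Finset.mem_filter, not_and]
      exact fun _ h => hqb h.symm
    obtain ⟨e, heE, heA, heq⟩ :=
      ih H hH q (Finset.mem_of_mem_erase hqH) (by rw [hfilter]; exact hcard)
    have hene : e ≠ (a, b, L) := by
      intro h; apply hqneb; rw [← heq, h]
    refine ⟨((if e.1 = a then splitTarget L e.2.2 a0 a1 e.2.1 b else e.1),
      (if e.2.1 = b then splitTarget L e.2.2 b0 b1 e.1 a else e.2.1), e.2.2),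
      ?_, ?_, ?_⟩
    · rw [hGE]
      exact Multiset.mem_map_of_mem _ ((Multiset.mem_erase_of_ne hene).2 heE)
    · dsimp only
      split
      · next he1 =>
        rcases splitTarget_mem L e.2.2 a0 a1 e.2.1 b with h' | h' <;>
          rw [h'] <;> [rw [hfa0]; rw [hfa1]] <;> rw [← he1] <;> exact heA
      · exact heA
    · dsimp only
      rw [if_neg (by rw [heq]; exact hqneb), heq]

/-- In a bit multigraph corresponding to a crossword puzzle, the number of edges
incident to the zero floor set ⌊0⌋_A is at least the number of floor sets of part
B that have exactly one vertex. -/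
theorem zero_floor_lower_bound (n : ℕ) (G : BitMG)
    (hG : ∃ v, VoidedFrom v (unvoidedCMG n) G) :
    ((G.B.image (fun q => ⌊q⌋)).filter
        (fun r => (G.B.filter (fun q => ⌊q⌋ = r)).card = 1)).card ≤
      (G.E.filter (fun e => ⌊e.1⌋ = 0)).card := by
  obtain ⟨v, hv⟩ := hG
  have inv := floor_invariant n v G hv
  set M := G.E.filter (fun e => ⌊e.1⌋ = 0) with hM
  have key : ∀ r ∈ (G.B.image (fun q => ⌊q⌋)).filter
      (fun r => (G.B.filter (fun q => ⌊q⌋ = r)).card = 1),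
      ∃ e ∈ M.toFinset, ⌊e.2.1⌋ = r := by
    intro r hr
    rw [Finset.mem_filter, Finset.mem_image] at hr
    obtain ⟨⟨q, hq, rfl⟩, hcard⟩ := hr
    obtain ⟨e, heE, heA, heq⟩ := inv q hq hcard
    refine ⟨e, ?_, by rw [heq]⟩
    rw [Multiset.mem_toFinset, hM, Multiset.mem_filter]
    exact ⟨heE, heA⟩
  classical
  set f : ℤ → ℚ × ℚ × Label := fun r =>
    if h : ∃ e ∈ M.toFinset, ⌊e.2.1⌋ = r then h.choose else (0, 0, Label.zero)
    with hf
  have hmem : ∀ r ∈ (G.B.image (fun q => ⌊q⌋)).filter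
      (fun r => (G.B.filter (fun q => ⌊q⌋ = r)).card = 1),
      f r ∈ M.toFinset ∧ ⌊(f r).2.1⌋ = r := by
    intro r hr
    have h := key r hr
    rw [hf]; simp only [dif_pos h]
    exact ⟨h.choose_spec.1, h.choose_spec.2⟩
  calc ((G.B.image (fun q => ⌊q⌋)).filter
        (fun r => (G.B.filter (fun q => ⌊q⌋ = r)).card = 1)).card
      ≤ M.toFinset.card := by
        apply Finset.card_le_card_of_injOn f (fun r hr => (hmem r hr).1)
        intro r hr s hs hfs
        rw [← (hmem r hr).2, ← (hmem s hs).2, hfs]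
    _ ≤ M.card := Multiset.toFinset_card_le M
end
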